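/- For all graphs G1, G2 and every positive integer k, α_k(G1 □ G2) ≥ α_k(G1) · α_k(G2). -/

import Mathlib

open SimpleGraph

lemma boxProd_walk_proj_left {V1 V2 : Type*} {G1 : SimpleGraph V1} {G2 : SimpleGraph V2}
    {x y : V1 × V2} (w : (G1 □ G2).Walk x y) :
    ∃ w1 : G1.Walk x.1 y.1, w1.length ≤ w.length := by
  induction w with
  | nil => exact ⟨SimpleGraph.Walk.nil, le_refl _⟩
  | @cons a b c h w ih =>
    obtain ⟨w1, hw1⟩ := ih
    rcases h with ⟨hadj, heq⟩ | ⟨hadj, heq⟩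
    · exact ⟨SimpleGraph.Walk.cons hadj w1, by exact Nat.succ_le_succ hw1⟩
    · exact ⟨w1.copy heq.symm rfl, by
        rw [SimpleGraph.Walk.length_copy]; exact hw1.trans (Nat.le_succ _)⟩

lemma boxProd_walk_proj_right {V1 V2 : Type*} {G1 : SimpleGraph V1} {G2 : SimpleGraph V2}
    {x y : V1 × V2} (w : (G1 □ G2).Walk x y) :
    ∃ w2 : G2.Walk x.2 y.2, w2.length ≤ w.length := by
  induction w with
  | nil => exact ⟨SimpleGraph.Walk.nil, le_refl _⟩
  | @cons a b c h w ih =>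
    obtain ⟨w2, hw2⟩ := ih
    rcases h with ⟨hadj, heq⟩ | ⟨hadj, heq⟩
    · exact ⟨w2.copy heq.symm rfl, by
        rw [SimpleGraph.Walk.length_copy]; exact hw2.trans (Nat.le_succ _)⟩
    · exact ⟨SimpleGraph.Walk.cons hadj w2, by exact Nat.succ_le_succ hw2⟩

lemma edist_left_le_boxProd {V1 V2 : Type*} {G1 : SimpleGraph V1} {G2 : SimpleGraph V2}
    (x y : V1 × V2) : G1.edist x.1 y.1 ≤ (G1 □ G2).edist x y := by
  rw [SimpleGraph.edist_eq_sInf (G := G1 □ G2)]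
  refine le_sInf ?_
  rintro b ⟨w, rfl⟩
  obtain ⟨w1, hw1⟩ := boxProd_walk_proj_left w
  exact (SimpleGraph.edist_le w1).trans (Nat.cast_le.mpr hw1)

lemma edist_right_le_boxProd {V1 V2 : Type*} {G1 : SimpleGraph V1} {G2 : SimpleGraph V2}
    (x y : V1 × V2) : G2.edist x.2 y.2 ≤ (G1 □ G2).edist x y := by
  rw [SimpleGraph.edist_eq_sInf (G := G1 □ G2)]
  refine le_sInf ?_
  rintro b ⟨w, rfl⟩
  obtain ⟨w2, hw2⟩ := boxProd_walk_proj_right w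
  exact (SimpleGraph.edist_le w2).trans (Nat.cast_le.mpr hw2)

/-- The `k`-independence number: the maximum size of a set of vertices at pairwise
distance greater than `k`. -/
noncomputable def kIndepNum {V : Type*} [Fintype V] (G : SimpleGraph V) (k : ℕ) : ℕ :=
  sSup {n | ∃ s : Finset V, s.card = n ∧ ∀ u ∈ s, ∀ v ∈ s, u ≠ v → (k : ℕ∞) < G.edist u v}

lemma kIndepNum_set_nonempty {V : Type*} [Fintype V] (G : SimpleGraph V) (k : ℕ) :
    {n | ∃ s : Finset V, s.card = n ∧ ∀ u ∈ s, ∀ v ∈ s, u ≠ v → (k : ℕ∞) < G.edist u v}.Nonempty :=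
  ⟨0, ∅, by simp, by simp⟩

lemma kIndepNum_set_bddAbove {V : Type*} [Fintype V] (G : SimpleGraph V) (k : ℕ) :
    BddAbove {n | ∃ s : Finset V, s.card = n ∧ ∀ u ∈ s, ∀ v ∈ s, u ≠ v → (k : ℕ∞) < G.edist u v} := by
  refine ⟨Fintype.card V, ?_⟩
  rintro n ⟨s, rfl, -⟩
  exact s.card_le_univ.trans_eq (by simp)

theorem kIndepNum_boxProd_ge {V1 V2 : Type*} [Fintype V1] [Fintype V2]
    (G1 : SimpleGraph V1) (G2 : SimpleGraph V2) (k : ℕ) (hk : 0 < k) :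
    kIndepNum (G1 □ G2) k ≥ kIndepNum G1 k * kIndepNum G2 k := by
  obtain ⟨s1, hs1c, hs1⟩ := Nat.sSup_mem (kIndepNum_set_nonempty G1 k) (kIndepNum_set_bddAbove G1 k)
  obtain ⟨s2, hs2c, hs2⟩ := Nat.sSup_mem (kIndepNum_set_nonempty G2 k) (kIndepNum_set_bddAbove G2 k)
  refine le_csSup (kIndepNum_set_bddAbove (G1 □ G2) k) ?_
  refine ⟨s1 ×ˢ s2, by rw [Finset.card_product, hs1c, hs2c]; rfl, ?_⟩
  rintro ⟨u1, u2⟩ hu ⟨v1, v2⟩ hv hne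
  rw [Finset.mem_product] at hu hv
  by_cases h1 : u1 = v1
  · have h2 : u2 ≠ v2 := fun h2 => hne (by rw [h1, h2])
    exact (hs2 u2 hu.2 v2 hv.2 h2).trans_le (edist_right_le_boxProd (u1, u2) (v1, v2))
  · exact (hs1 u1 hu.1 v1 hv.1 h1).trans_le (edist_left_le_boxProd (u1, u2) (v1, v2))
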